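/- Let r ≥ 2, s ≥ 2, t ≥ 3, and let α = (a₁ … a_r b_s … b₁) and β = (c₁ … c_t b_s … b₁) be cyclic permutations on pairwise distinct symbols a₁,…,a_r, b₁,…,b_s, c₁,…,c_t. Then with σ := α⁻¹ (β α⁻¹ β⁻¹ α) α, the permutation σ ∘ (β² σ β⁻²) equals the 3-cycle (b_{s-1} c_{t-2} c_t). -/

import Mathlib

namespace ThreeCycleAux
open List Equiv

variable {X : Type*} [DecidableEq X] {m k : ℕ}

lemma getL (f : Fin m → X) (g : Fin k → X) {i : ℕ} (h : i < m) :
    (List.ofFn f ++ (List.ofFn g).reverse)[i]'(by simp; omega) = f ⟨i, h⟩ := by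
  rw [List.getElem_append_left (by simpa using h)]
  simp

lemma getR (f : Fin m → X) (g : Fin k → X) {j : ℕ} (h : j < k) :
    (List.ofFn f ++ (List.ofFn g).reverse)[m + j]'(by simp; omega) = g ⟨k - 1 - j, by omega⟩ := by
  rw [List.getElem_append_right (by simp)]
  simp [List.getElem_reverse]

variable (hm : 1 ≤ m) (hk : 1 ≤ k) {f : Fin m → X} {g : Fin k → X}
  (hnd : (List.ofFn f ++ (List.ofFn g).reverse).Nodup)
include hm hk hnd

lemma fp_f {i : ℕ} (h : i + 1 < m) :
    (List.ofFn f ++ (List.ofFn g).reverse).formPerm (f ⟨i, by omega⟩) = f ⟨i + 1, h⟩ := by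
  rw [← getL f g (show i < m by omega),
    List.formPerm_apply_getElem _ hnd i (by simp; omega)]
  have : (i + 1) % (List.ofFn f ++ (List.ofFn g).reverse).length = i + 1 := by
    rw [Nat.mod_eq_of_lt]; simp; omega
  simp_rw [this]
  exact getL f g h

lemma fp_last_f :
    (List.ofFn f ++ (List.ofFn g).reverse).formPerm (f ⟨m - 1, by omega⟩) = g ⟨k - 1, by omega⟩ := by
  rw [← getL f g (show m - 1 < m by omega),
    List.formPerm_apply_getElem _ hnd (m-1) (by simp; omega)]
  have : (m - 1 + 1) % (List.ofFn f ++ (List.ofFn g).reverse).length = m + 0 := by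
    rw [Nat.sub_add_cancel hm, Nat.mod_eq_of_lt] <;> simp <;> omega
  simp_rw [this]
  rw [getR f g (show 0 < k by omega)]; congr 1

lemma fp_g {j : ℕ} (h : j + 1 < k) :
    (List.ofFn f ++ (List.ofFn g).reverse).formPerm (g ⟨j + 1, h⟩) = g ⟨j, by omega⟩ := by
  have e1 : g ⟨j+1, h⟩ = g ⟨k - 1 - (k - 2 - j), by omega⟩ := by congr 1; apply Fin.ext; simp; omega
  rw [e1, ← getR f g (show k - 2 - j < k by omega),
    List.formPerm_apply_getElem _ hnd (m + (k-2-j)) (by simp; omega)]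
  have : (m + (k-2-j) + 1) % (List.ofFn f ++ (List.ofFn g).reverse).length = m + (k-1-j) := by
    rw [Nat.mod_eq_of_lt (by simp; omega)]; omega
  simp_rw [this]
  rw [getR f g (show k - 1 - j < k by omega)]
  congr 1; apply Fin.ext; simp; omega

lemma fp_g0 :
    (List.ofFn f ++ (List.ofFn g).reverse).formPerm (g ⟨0, by omega⟩) = f ⟨0, by omega⟩ := by
  have e1 : g ⟨0, by omega⟩ = g ⟨k - 1 - (k - 1), by omega⟩ := by congr 1; apply Fin.ext; simp
  rw [e1, ← getR f g (show k - 1 < k by omega),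
    List.formPerm_apply_getElem _ hnd (m + (k-1)) (by simp; omega)]
  have : (m + (k-1) + 1) % (List.ofFn f ++ (List.ofFn g).reverse).length = 0 := by
    have : m + (k-1) + 1 = m + k := by omega
    rw [this]; simp
  simp_rw [this]
  exact getL f g (by omega)

end ThreeCycleAux

open Equiv in
lemma swap_disjoint' {X : Type*} [DecidableEq X] {x y z w : X}
    (h1 : x ≠ z) (h2 : x ≠ w) (h3 : y ≠ z) (h4 : y ≠ w) :
    (Equiv.swap x y).Disjoint (Equiv.swap z w) := by
  intro u
  by_cases hx : u = x
  · right; subst hx; exact Equiv.swap_apply_of_ne_of_ne h1 h2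
  by_cases hy : u = y
  · right; subst hy; exact Equiv.swap_apply_of_ne_of_ne h3 h4
  · left; exact Equiv.swap_apply_of_ne_of_ne hx hy

lemma three_swap' {X : Type*} [DecidableEq X] {x y z : X}
    (hxy : x ≠ y) (hxz : x ≠ z) (hyz : y ≠ z) :
    Equiv.swap z y * Equiv.swap x z = Equiv.swap x y * Equiv.swap y z := by
  ext u
  simp only [Equiv.Perm.mul_apply, Equiv.swap_apply_def]
  split_ifs <;> simp_all

open ThreeCycleAux in
/-- General case (r,s,t) with r ≥ 2, s ≥ 2, t ≥ 3: with
α = (a₁ … a_r b_s … b₁) and β = (c₁ … c_t b_s … b₁) on distinct symbols,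
setting σ = α⁻¹ (β α⁻¹ β⁻¹ α) α (left-to-right), the permutation
σ ∘ (β² σ β⁻²) (left-to-right) equals the 3-cycle (b_{s-1} c_{t-2} c_t).
Left-to-right composition σ τ : x ↦ τ(σ(x)) corresponds to the Mathlib
product τ * σ. -/
theorem three_cycle_case_r_s_t {X : Type*} [DecidableEq X]
    (r s t : ℕ) (hr : 2 ≤ r) (hs : 2 ≤ s) (ht : 3 ≤ t)
    (a : Fin r → X) (b : Fin s → X) (c : Fin t → X)
    (hdist : (List.ofFn a ++ List.ofFn b ++ List.ofFn c).Nodup) :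
    let α := List.formPerm (List.ofFn a ++ (List.ofFn b).reverse)
    let β := List.formPerm (List.ofFn c ++ (List.ofFn b).reverse)
    let σ := α * (α * β⁻¹ * α⁻¹ * β) * α⁻¹   -- α⁻¹ (β α⁻¹ β⁻¹ α) α left-to-right
    (β⁻¹ * β⁻¹ * σ * β * β) * σ =
      List.formPerm [b ⟨s - 2, by omega⟩, c ⟨t - 3, by omega⟩, c ⟨t - 1, by omega⟩] := by
  intro α β σ
  -- distinctness facts
  simp only [List.nodup_append, List.nodup_ofFn, List.mem_ofFn, List.disjoint_left] at hdist
  obtain ⟨⟨hainj, hbinj, hABd⟩, hcinj, hCd⟩ := hdist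
  have hab : ∀ i j, a i ≠ b j := fun i j h => hABd _ ⟨i, rfl⟩ _ ⟨j, rfl⟩ h
  have hac : ∀ i j, a i ≠ c j := fun i j h =>
    hCd (a i) (List.mem_append_left _ (by simp [List.mem_ofFn])) (c j) ⟨j, rfl⟩ h
  have hbc : ∀ i j, b i ≠ c j := fun i j h =>
    hCd (b i) (List.mem_append_right _ (by simp [List.mem_ofFn])) (c j) ⟨j, rfl⟩ h
  have haa : ∀ i j : Fin r, (i : ℕ) ≠ (j : ℕ) → a i ≠ a j := by
    intro i j hij h; exact hij (congrArg Fin.val (hainj h))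
  have hbb : ∀ i j : Fin s, (i : ℕ) ≠ (j : ℕ) → b i ≠ b j := by
    intro i j hij h; exact hij (congrArg Fin.val (hbinj h))
  have hcc : ∀ i j : Fin t, (i : ℕ) ≠ (j : ℕ) → c i ≠ c j := by
    intro i j hij h; exact hij (congrArg Fin.val (hcinj h))
  -- nodup of the two cycle lists
  have hndα : (List.ofFn a ++ (List.ofFn b).reverse).Nodup := by
    simp only [List.nodup_append, List.nodup_ofFn, List.nodup_reverse, List.disjoint_left,
      List.mem_reverse, List.mem_ofFn]
    exact ⟨hainj, hbinj, fun x ⟨i, hi⟩ y ⟨j, hj⟩ => by subst hi hj; exact hab i j⟩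
  have hndβ : (List.ofFn c ++ (List.ofFn b).reverse).Nodup := by
    simp only [List.nodup_append, List.nodup_ofFn, List.nodup_reverse, List.disjoint_left,
      List.mem_reverse, List.mem_ofFn]
    exact ⟨hcinj, hbinj, fun x ⟨i, hi⟩ y ⟨j, hj⟩ => by subst hi hj; exact (hbc j i).symm⟩
  -- forward action lemmas
  have hαa : ∀ (i : ℕ) (h : i + 1 < r), α (a ⟨i, by omega⟩) = a ⟨i + 1, h⟩ :=
    fun i h => fp_f (by omega) (by omega) hndα h
  have hαlast : α (a ⟨r - 1, by omega⟩) = b ⟨s - 1, by omega⟩ :=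
    fp_last_f (by omega) (by omega) hndα
  have hαb : ∀ (j : ℕ) (h : j + 1 < s), α (b ⟨j + 1, h⟩) = b ⟨j, by omega⟩ :=
    fun j h => fp_g (by omega) (by omega) hndα h
  have hαb0 : α (b ⟨0, by omega⟩) = a ⟨0, by omega⟩ := fp_g0 (by omega) (by omega) hndα
  have hαc : ∀ j, α (c j) = c j := by
    intro j
    apply List.formPerm_apply_of_notMem
    simp only [List.mem_append, List.mem_reverse, List.mem_ofFn, Set.mem_range]
    rintro (⟨i, hi⟩ | ⟨i, hi⟩)
    · exact hac i j hi
    · exact hbc i j hi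
  have hβc : ∀ (i : ℕ) (h : i + 1 < t), β (c ⟨i, by omega⟩) = c ⟨i + 1, h⟩ :=
    fun i h => fp_f (by omega) (by omega) hndβ h
  have hβlast : β (c ⟨t - 1, by omega⟩) = b ⟨s - 1, by omega⟩ :=
    fp_last_f (by omega) (by omega) hndβ
  have hβb : ∀ (j : ℕ) (h : j + 1 < s), β (b ⟨j + 1, h⟩) = b ⟨j, by omega⟩ :=
    fun j h => fp_g (by omega) (by omega) hndβ h
  have hβb0 : β (b ⟨0, by omega⟩) = c ⟨0, by omega⟩ := fp_g0 (by omega) (by omega) hndβ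
  have hβa : ∀ i, β (a i) = a i := by
    intro i
    apply List.formPerm_apply_of_notMem
    simp only [List.mem_append, List.mem_reverse, List.mem_ofFn, Set.mem_range]
    rintro (⟨j, hj⟩ | ⟨j, hj⟩)
    · exact hac i j hj.symm
    · exact hab i j hj.symm
  -- abbreviations for special points (as plain equations used in rewriting)
  have ebs : b ⟨s - 1, by omega⟩ = b ⟨s - 2 + 1, by omega⟩ := by
    congr 1; apply Fin.ext; simp; omega
  have ect1 : c ⟨t - 2 + 1, by omega⟩ = c ⟨t - 1, by omega⟩ := by
    congr 1; apply Fin.ext; simp; omega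
  have ect2 : c ⟨t - 3 + 1, by omega⟩ = c ⟨t - 2, by omega⟩ := by
    congr 1; apply Fin.ext; simp; omega
  have hcomm : α * β = β * ((Equiv.swap (b ⟨s - 1, by omega⟩) (c ⟨t - 1, by omega⟩) *
      Equiv.swap (a ⟨0, by omega⟩) (b ⟨0, by omega⟩)) * α) := by
    ext x
    simp only [Equiv.Perm.mul_apply]
    by_cases hxa : ∃ i, a i = x
    · obtain ⟨⟨i, hilt⟩, rfl⟩ := hxa
      rw [hβa]
      by_cases hi : i + 1 < r
      · rw [hαa i hi,
          Equiv.swap_apply_of_ne_of_ne (haa _ _ (by simp)) (hab _ _),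
          Equiv.swap_apply_of_ne_of_ne (hab _ _) (hac _ _), hβa]
      · have hi' : i = r - 1 := by omega
        subst hi'
        rw [hαlast,
          Equiv.swap_apply_of_ne_of_ne (Ne.symm (hab _ _)) (hbb _ _ (by simp; omega)),
          Equiv.swap_apply_left, hβlast]
    · by_cases hxb : ∃ j, b j = x
      · obtain ⟨⟨j, hjlt⟩, rfl⟩ := hxb
        match j, hjlt with
        | 0, hjlt =>
          rw [hβb0, hαc, hαb0, Equiv.swap_apply_left,
            Equiv.swap_apply_of_ne_of_ne (hbb _ _ (by simp; omega)) (hbc _ _), hβb0]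
        | 1, hjlt =>
          rw [show (⟨1, hjlt⟩ : Fin s) = ⟨0 + 1, hjlt⟩ from rfl, hβb 0 hjlt, hαb0,
            hαb 0 hjlt, Equiv.swap_apply_right,
            Equiv.swap_apply_of_ne_of_ne (hab _ _) (hac _ _), hβa]
        | (j+2), hjlt =>
          rw [show (⟨j + 2, hjlt⟩ : Fin s) = ⟨(j + 1) + 1, hjlt⟩ from rfl,
            hβb (j+1) hjlt, hαb (j+1) hjlt, hαb j (by omega),
            Equiv.swap_apply_of_ne_of_ne (Ne.symm (hab _ _)) (hbb _ _ (by simp)),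
            Equiv.swap_apply_of_ne_of_ne (hbb _ _ (by simp; omega)) (hbc _ _),
            hβb j (by omega)]
      · by_cases hxc : ∃ j, c j = x
        · obtain ⟨⟨j, hjlt⟩, rfl⟩ := hxc
          rw [hαc]
          by_cases hj : j + 1 < t
          · rw [hβc j hj, hαc,
              Equiv.swap_apply_of_ne_of_ne (Ne.symm (hac _ _)) (Ne.symm (hbc _ _)),
              Equiv.swap_apply_of_ne_of_ne (Ne.symm (hbc _ _)) (hcc _ _ (by simp; omega)),
              hβc j hj]
          · have hj' : j = t - 1 := by omega
            subst hj'
            rw [hβlast, ebs, hαb (s-2) (by omega),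
              Equiv.swap_apply_of_ne_of_ne (Ne.symm (hac _ _)) (Ne.symm (hbc _ _)),
              Equiv.swap_apply_right, hβb (s-2) (by omega)]
        · push_neg at hxa hxb hxc
          have hmα : x ∉ List.ofFn a ++ (List.ofFn b).reverse := by
            simp only [List.mem_append, List.mem_reverse, List.mem_ofFn, Set.mem_range]
            rintro (⟨i, hi⟩ | ⟨i, hi⟩)
            exacts [hxa i hi, hxb i hi]
          have hmβ : x ∉ List.ofFn c ++ (List.ofFn b).reverse := by
            simp only [List.mem_append, List.mem_reverse, List.mem_ofFn, Set.mem_range]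
            rintro (⟨i, hi⟩ | ⟨i, hi⟩)
            exacts [hxc i hi, hxb i hi]
          have hfixα : α x = x := List.formPerm_apply_of_notMem hmα
          have hfixβ : β x = x := List.formPerm_apply_of_notMem hmβ
          rw [hfixβ, hfixα,
            Equiv.swap_apply_of_ne_of_ne (fun h => hxa _ h.symm) (fun h => hxb _ h.symm),
            Equiv.swap_apply_of_ne_of_ne (fun h => hxb _ h.symm) (fun h => hxc _ h.symm),
            hfixβ]
  have hdisj : (Equiv.swap (b ⟨s - 1, by omega⟩) (c ⟨t - 1, by omega⟩)).Disjoint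
      (Equiv.swap (a ⟨0, by omega⟩) (b ⟨0, by omega⟩)) :=
    swap_disjoint' (Ne.symm (hab _ _)) (hbb _ _ (by simp; omega))
      (Ne.symm (hac _ _)) (Ne.symm (hbc _ _))
  have hinner : α * β⁻¹ * α⁻¹ * β =
      Equiv.swap (b ⟨s - 1, by omega⟩) (c ⟨t - 1, by omega⟩) *
      Equiv.swap (a ⟨0, by omega⟩) (b ⟨0, by omega⟩) := by
    have hτinv : (Equiv.swap (b ⟨s - 1, by omega⟩) (c ⟨t - 1, by omega⟩) *
        Equiv.swap (a ⟨0, by omega⟩) (b ⟨0, by omega⟩))⁻¹ =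
        Equiv.swap (b ⟨s - 1, by omega⟩) (c ⟨t - 1, by omega⟩) *
        Equiv.swap (a ⟨0, by omega⟩) (b ⟨0, by omega⟩) := by
      rw [mul_inv_rev, Equiv.swap_inv, Equiv.swap_inv, hdisj.commute.symm.eq]
    have h3 : (α * β⁻¹ * α⁻¹ * β) * (β⁻¹ * (α * β) * α⁻¹) = 1 := by group
    have h2 : β⁻¹ * (α * β) * α⁻¹ =
        Equiv.swap (b ⟨s - 1, by omega⟩) (c ⟨t - 1, by omega⟩) *
        Equiv.swap (a ⟨0, by omega⟩) (b ⟨0, by omega⟩) := by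
      rw [hcomm]; group
    rw [mul_eq_one_iff_eq_inv] at h3
    rw [h3, h2, hτinv]
  have hσ : σ = Equiv.swap (b ⟨s - 2, by omega⟩) (c ⟨t - 1, by omega⟩) *
      Equiv.swap (a ⟨1, by omega⟩) (a ⟨0, by omega⟩) := by
    have hσ0 : σ = α * (α * β⁻¹ * α⁻¹ * β) * α⁻¹ := rfl
    rw [hσ0, hinner]
    have e : ∀ u v : Equiv.Perm X, α * (u * v) * α⁻¹ = (α * u * α⁻¹) * (α * v * α⁻¹) := by
      intro u v
      simp only [mul_assoc, inv_mul_cancel_left]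
    rw [e, ← Equiv.swap_apply_apply, ← Equiv.swap_apply_apply, ebs, hαb (s-2) (by omega),
      hαc, hαa 0 (by omega), hαb0]
  have inv_of : ∀ {x y : X}, β x = y → β⁻¹ y = x := fun h => by
    rw [← h]; simp
  have hβi1 : β⁻¹ (b ⟨s - 2, by omega⟩) = b ⟨s - 1, by omega⟩ := by
    apply inv_of; rw [ebs, hβb (s-2) (by omega)]
  have hβi2 : β⁻¹ (b ⟨s - 1, by omega⟩) = c ⟨t - 1, by omega⟩ := inv_of hβlast
  have hβi3 : β⁻¹ (c ⟨t - 1, by omega⟩) = c ⟨t - 2, by omega⟩ := by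
    apply inv_of; rw [hβc (t-2) (by omega), ect1]
  have hβi4 : β⁻¹ (c ⟨t - 2, by omega⟩) = c ⟨t - 3, by omega⟩ := by
    apply inv_of; rw [hβc (t-3) (by omega), ect2]
  have hβia : ∀ i, β⁻¹ (a i) = a i := fun i => inv_of (hβa i)
  have key : β⁻¹ * β⁻¹ * σ * β * β =
      Equiv.swap (c ⟨t - 1, by omega⟩) (c ⟨t - 3, by omega⟩) *
      Equiv.swap (a ⟨1, by omega⟩) (a ⟨0, by omega⟩) := by
    rw [hσ]
    have e : ∀ u v : Equiv.Perm X, β⁻¹ * β⁻¹ * (u * v) * β * β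
        = ((β⁻¹*β⁻¹) * u * (β⁻¹*β⁻¹)⁻¹) * ((β⁻¹*β⁻¹) * v * (β⁻¹*β⁻¹)⁻¹) := by
      intro u v
      simp only [mul_inv_rev, inv_inv, mul_assoc, mul_inv_cancel_left, inv_mul_cancel_left]
    rw [e, ← Equiv.swap_apply_apply, ← Equiv.swap_apply_apply]
    simp only [Equiv.Perm.mul_apply]
    rw [hβi1, hβi2, hβi3, hβi4]; simp only [hβia]
  rw [key, hσ]
  simp only [List.formPerm_cons_cons, List.formPerm_singleton, mul_one]
  have hd2 : (Equiv.swap (a ⟨1, by omega⟩) (a ⟨0, by omega⟩)).Disjoint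
      (Equiv.swap (b ⟨s - 2, by omega⟩) (c ⟨t - 1, by omega⟩)) :=
    swap_disjoint' (hab _ _) (hac _ _) (hab _ _) (hac _ _)
  calc (Equiv.swap (c ⟨t - 1, by omega⟩) (c ⟨t - 3, by omega⟩) *
        Equiv.swap (a ⟨1, by omega⟩) (a ⟨0, by omega⟩)) *
        (Equiv.swap (b ⟨s - 2, by omega⟩) (c ⟨t - 1, by omega⟩) *
        Equiv.swap (a ⟨1, by omega⟩) (a ⟨0, by omega⟩))
      = Equiv.swap (c ⟨t - 1, by omega⟩) (c ⟨t - 3, by omega⟩) *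
        ((Equiv.swap (a ⟨1, by omega⟩) (a ⟨0, by omega⟩) *
          Equiv.swap (b ⟨s - 2, by omega⟩) (c ⟨t - 1, by omega⟩)) *
         Equiv.swap (a ⟨1, by omega⟩) (a ⟨0, by omega⟩)) := by group
    _ = Equiv.swap (c ⟨t - 1, by omega⟩) (c ⟨t - 3, by omega⟩) *
        ((Equiv.swap (b ⟨s - 2, by omega⟩) (c ⟨t - 1, by omega⟩) *
          Equiv.swap (a ⟨1, by omega⟩) (a ⟨0, by omega⟩)) *
         Equiv.swap (a ⟨1, by omega⟩) (a ⟨0, by omega⟩)) := by rw [hd2.commute.eq]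
    _ = Equiv.swap (c ⟨t - 1, by omega⟩) (c ⟨t - 3, by omega⟩) *
        Equiv.swap (b ⟨s - 2, by omega⟩) (c ⟨t - 1, by omega⟩) := by
          rw [mul_assoc, Equiv.swap_mul_self, mul_one]
    _ = Equiv.swap (b ⟨s - 2, by omega⟩) (c ⟨t - 3, by omega⟩) *
        Equiv.swap (c ⟨t - 3, by omega⟩) (c ⟨t - 1, by omega⟩) :=
          three_swap' (hbc _ _) (hbc _ _) (hcc _ _ (by simp; omega))
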